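/- Under the hypotheses of the finite-radius contraction theorem — X a real Banach space, x̄ ∈ X, F : X → X continuously differentiable, A : X → X bounded linear, constants Y, Z₁, Z₂ ≥ 0 and R ∈ [0,∞] with ‖A F(x̄)‖ ≤ Y, ‖I − A∘DF(x̄)‖ ≤ Z₁, and ‖A∘(DF(x) − DF(x̄))‖ ≤ Z₂‖x − x̄‖ for all x ∈ B_R(x̄) — if r ∈ [0, R] satisfies Y + r(Z₁ − 1) + (r²/2)Z₂ ≤ 0 and Z₁ + rZ₂ < 1, then the quasi-Newton operator T(x) := x − A F(x) maps the closed ball B_r(x̄) into itself and satisfies ‖T(x) − T(y)‖ ≤ (Z₁ + rZ₂)‖x − y‖ for all x, y ∈ B_r(x̄); in particular, T is a contraction on B_r(x̄). -/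

import Mathlib

open scoped ENNReal

set_option maxHeartbeats 1600000 in
/-- Under the radii polynomial hypotheses, the quasi-Newton operator
`T x = x - A (F x)` maps the closed ball of radius `r` around `xbar` into itself and is
Lipschitz with constant `Z₁ + r * Z₂` on that ball; since `Z₁ + r * Z₂ < 1`, it is a
contraction on the ball. -/
theorem quasi_newton_contraction_on_ball
    {X : Type*} [NormedAddCommGroup X] [NormedSpace ℝ X] [CompleteSpace X]
    (F : X → X) (hF : ContDiff ℝ 1 F)
    (xbar : X) (A : X →L[ℝ] X)
    (R : ℝ≥0∞) (Y Z₁ Z₂ : ℝ) (hY0 : 0 ≤ Y) (hZ₁0 : 0 ≤ Z₁) (hZ₂0 : 0 ≤ Z₂)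
    (hY : ‖A (F xbar)‖ ≤ Y)
    (hZ₁ : ‖ContinuousLinearMap.id ℝ X - A.comp (fderiv ℝ F xbar)‖ ≤ Z₁)
    (hZ₂ : ∀ x : X, ENNReal.ofReal ‖x - xbar‖ ≤ R →
      ‖A.comp (fderiv ℝ F x - fderiv ℝ F xbar)‖ ≤ Z₂ * ‖x - xbar‖)
    (r : ℝ) (hr0 : 0 ≤ r) (hrR : ENNReal.ofReal r ≤ R)
    (hP : Y + r * (Z₁ - 1) + r ^ 2 / 2 * Z₂ ≤ 0)
    (hcontr : Z₁ + r * Z₂ < 1)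
    (T : X → X) (hT : ∀ x, T x = x - A (F x)) :
    (∀ x ∈ Metric.closedBall xbar r, T x ∈ Metric.closedBall xbar r) ∧
    (∀ x ∈ Metric.closedBall xbar r, ∀ y ∈ Metric.closedBall xbar r,
      ‖T x - T y‖ ≤ (Z₁ + r * Z₂) * ‖x - y‖) := by
  have hTe : T = fun x => x - A (F x) := funext hT
  have hdF : ∀ x : X, HasFDerivAt F (fderiv ℝ F x) x := fun x =>
    (hF.differentiable one_ne_zero x).hasFDerivAt
  have hdT : ∀ x : X,
      HasFDerivAt T (ContinuousLinearMap.id ℝ X - A.comp (fderiv ℝ F x)) x := by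
    intro x
    rw [hTe]
    exact (hasFDerivAt_id x).sub (A.hasFDerivAt.comp x (hdF x))
  -- pointwise operator-norm bound
  have hbound : ∀ x : X, ‖x - xbar‖ ≤ r →
      ‖ContinuousLinearMap.id ℝ X - A.comp (fderiv ℝ F x)‖ ≤ Z₁ + Z₂ * ‖x - xbar‖ := by
    intro x hx
    have hxR : ENNReal.ofReal ‖x - xbar‖ ≤ R :=
      le_trans (ENNReal.ofReal_le_ofReal hx) hrR
    have key : ContinuousLinearMap.id ℝ X - A.comp (fderiv ℝ F x)
        = (ContinuousLinearMap.id ℝ X - A.comp (fderiv ℝ F xbar))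
          - A.comp (fderiv ℝ F x - fderiv ℝ F xbar) := by
      rw [ContinuousLinearMap.comp_sub]; abel
    rw [key]
    exact le_trans (norm_sub_le _ _) (add_le_add hZ₁ (hZ₂ x hxR))
  constructor
  · -- self-mapping
    intro x hx
    rw [Metric.mem_closedBall, dist_eq_norm] at hx ⊢
    obtain ⟨v, hv⟩ : ∃ v : X, v = x - xbar := ⟨_, rfl⟩
    obtain ⟨c, hc⟩ : ∃ c : ℝ, c = ‖v‖ := ⟨_, rfl⟩
    have hc0 : 0 ≤ c := hc ▸ norm_nonneg _
    have hcr : c ≤ r := by rw [hc, hv]; exact hx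
    set g' : ℝ → X := fun t =>
      (ContinuousLinearMap.id ℝ X - A.comp (fderiv ℝ F (xbar + t • v))) v with hg'
    have hline : ∀ t : ℝ, HasDerivAt (fun s : ℝ => xbar + s • v) v t := by
      intro t
      simpa using ((hasDerivAt_id t).smul_const v).const_add xbar
    have hg : ∀ t : ℝ, HasDerivAt (fun s => T (xbar + s • v)) (g' t) t := by
      intro t
      exact (hdT (xbar + t • v)).comp_hasDerivAt t (hline t)
    have hcont : Continuous g' := by
      have h1 : Continuous fun t : ℝ =>
          (ContinuousLinearMap.id ℝ X - A.comp (fderiv ℝ F (xbar + t • v))) := by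
        refine continuous_const.sub ?_
        exact (continuous_const.clm_comp
          ((hF.continuous_fderiv one_ne_zero).comp (by continuity)))
      exact h1.clm_apply continuous_const
    have hint : (∫ t in (0:ℝ)..1, g' t) = T (xbar + (1:ℝ) • v) - T (xbar + (0:ℝ) • v) :=
      intervalIntegral.integral_eq_sub_of_hasDerivAt (fun t _ => hg t)
        (hcont.intervalIntegrable 0 1)
    have h10 : T (xbar + (1:ℝ) • v) = T x := by
      have hxx : xbar + (x - xbar) = x := by abel
      rw [one_smul, hv, hxx]
    have h00 : T (xbar + (0:ℝ) • v) = T xbar := by rw [zero_smul, add_zero]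
    have hTx : T x - T xbar = ∫ t in (0:ℝ)..1, g' t := by rw [hint, h10, h00]
    have hnorm : ∀ t ∈ Set.Icc (0:ℝ) 1, ‖g' t‖ ≤ (Z₁ + Z₂ * (t * c)) * c := by
      intro t ht
      have hpt : ‖(xbar + t • v) - xbar‖ = t * c := by
        rw [add_sub_cancel_left, norm_smul, Real.norm_eq_abs, abs_of_nonneg ht.1, hc]
      have h1 : ‖(xbar + t • v) - xbar‖ ≤ r := by
        rw [hpt]
        nlinarith [ht.1, ht.2]
      have := hbound (xbar + t • v) h1
      rw [hpt] at this
      calc ‖g' t‖ ≤ ‖ContinuousLinearMap.id ℝ X - A.comp (fderiv ℝ F (xbar + t • v))‖ * c :=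
            (by rw [hc]; exact ContinuousLinearMap.le_opNorm _ _)
        _ ≤ (Z₁ + Z₂ * (t * c)) * c := by
            apply mul_le_mul_of_nonneg_right this hc0
    have hIle : ‖T x - T xbar‖ ≤ ∫ t in (0:ℝ)..1, (Z₁ + Z₂ * (t * c)) * c := by
      rw [hTx]
      refine le_trans (intervalIntegral.norm_integral_le_integral_norm zero_le_one) ?_
      apply intervalIntegral.integral_mono_on zero_le_one
      · exact (hcont.norm).intervalIntegrable 0 1
      · exact Continuous.intervalIntegrable (by fun_prop) 0 1
      · exact hnorm
    have hIval : (∫ t in (0:ℝ)..1, (Z₁ + Z₂ * (t * c)) * c) = Z₁ * c + Z₂ * c ^ 2 / 2 := by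
      have : (fun t : ℝ => (Z₁ + Z₂ * (t * c)) * c) =
          fun t : ℝ => Z₁ * c + (Z₂ * c * c) * t := by
        funext t; ring
      rw [this, intervalIntegral.integral_add intervalIntegrable_const
        (Continuous.intervalIntegrable (by fun_prop) 0 1),
        intervalIntegral.integral_const, intervalIntegral.integral_const_mul, integral_id]
      norm_num
      ring
    have hTxbar : ‖T xbar - xbar‖ ≤ Y := by
      rw [hT xbar]
      simpa using hY
    have htri : ‖T x - xbar‖ ≤ ‖T x - T xbar‖ + ‖T xbar - xbar‖ := by
      have h := dist_triangle (T x) (T xbar) xbar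
      simpa [dist_eq_norm] using h
    have hfin : ‖T x - xbar‖ ≤ Z₁ * c + Z₂ * c ^ 2 / 2 + Y := by
      calc ‖T x - xbar‖ ≤ ‖T x - T xbar‖ + ‖T xbar - xbar‖ := htri
        _ ≤ (Z₁ * c + Z₂ * c ^ 2 / 2) + Y := by
            rw [← hIval]; exact add_le_add hIle hTxbar
    have hpoly : Z₁ * c + Z₂ * c ^ 2 / 2 + Y ≤ r := by
      have h1 : Z₁ * c ≤ Z₁ * r := mul_le_mul_of_nonneg_left hcr hZ₁0
      have h2 : Z₂ * c ^ 2 ≤ Z₂ * r ^ 2 :=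
        mul_le_mul_of_nonneg_left (pow_le_pow_left₀ hc0 hcr 2) hZ₂0
      linarith
    exact hfin.trans hpoly
  · -- Lipschitz
    intro x hx y hy
    have hconv : Convex ℝ (Metric.closedBall xbar r) := convex_closedBall _ _
    refine hconv.norm_image_sub_le_of_norm_hasFDerivWithin_le
      (f' := fun z => ContinuousLinearMap.id ℝ X - A.comp (fderiv ℝ F z))
      (fun z hz => (hdT z).hasFDerivWithinAt) ?_ hy hx
    intro z hz
    rw [Metric.mem_closedBall, dist_eq_norm] at hz
    calc ‖ContinuousLinearMap.id ℝ X - A.comp (fderiv ℝ F z)‖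
        ≤ Z₁ + Z₂ * ‖z - xbar‖ := hbound z hz
      _ ≤ Z₁ + r * Z₂ := by nlinarith
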